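/- Let F be a non-archimedean local field of characteristic 2, let d ∈ F* and a, b ∈ F, and suppose the quadratic form ⟨d⟩ ⊥ [a,b] of rank 3 is anisotropic over F. Then the quaternion algebra {da, d⁻¹b / F} is a division algebra (it is not split). -/

import Mathlib

open scoped TensorProduct

noncomputable section

/-- Two quadratic forms are *isometric* if there is an isometry equivalence between them. -/
def QFIsometric {F V W : Type*} [Field F] [AddCommGroup V] [Module F V]
    [AddCommGroup W] [Module F W] (f : QuadraticForm F V) (g : QuadraticForm F W) : Prop :=
  Nonempty (QuadraticMap.IsometryEquiv f g)

/-- Two quadratic forms are *similar* if `f` is isometric to a nonzero scalar multiple of `g`. -/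
def QFSimilar {F V W : Type*} [Field F] [AddCommGroup V] [Module F V]
    [AddCommGroup W] [Module F W] (f : QuadraticForm F V) (g : QuadraticForm F W) : Prop :=
  ∃ a : F, a ≠ 0 ∧ QFIsometric f (a • g)

/-- A quadratic form (of even rank) is non-degenerate iff its polar bilinear form
is non-degenerate; for odd rank, the radical of the polar form is one-dimensional and
contains no nonzero vector on which `q` vanishes. -/
def QFNondegenerate {F V : Type*} [Field F] [AddCommGroup V] [Module F V]
    (q : QuadraticForm F V) : Prop :=
  (Even (Module.finrank F V) ∧ LinearMap.BilinForm.Nondegenerate q.polarBilin) ∨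
  (Odd (Module.finrank F V) ∧ Module.finrank F (LinearMap.ker q.polarBilin) = 1 ∧
    ∀ x ∈ LinearMap.ker q.polarBilin, q x = 0 → x = 0)

/-- The Witt index of a quadratic form: the largest dimension of a totally isotropic
subspace. -/
def wittIndex (F : Type*) {V : Type*} [Field F] [AddCommGroup V] [Module F V]
    (q : QuadraticForm F V) : ℕ :=
  sSup {m : ℕ | ∃ W : Submodule F V, Module.finrank F W = m ∧ ∀ x ∈ W, q x = 0}

/-- The binary quadratic form `[a,b]` of characteristic `2` theory:
`q(x) = a·x₀² + x₀x₁ + b·x₁²`, so `q(e₁) = a`, `q(e₂) = b` and the polar form has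
`b_q(e₁,e₂) = 1`. -/
def binQF (F : Type*) [Field F] (a b : F) : QuadraticForm F (Fin 2 → F) :=
  a • QuadraticMap.linMulLin (LinearMap.proj 0) (LinearMap.proj 0)
    + QuadraticMap.linMulLin (LinearMap.proj 0) (LinearMap.proj 1)
    + b • QuadraticMap.linMulLin (LinearMap.proj 1) (LinearMap.proj 1)

/-- The orthogonal sum `[a₁,b₁] ⊥ ⋯ ⊥ [a_m,b_m]`. -/
def binSumQF (F : Type*) [Field F] {m : ℕ} (a b : Fin m → F) :
    QuadraticForm F (Fin m → Fin 2 → F) :=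
  QuadraticMap.pi fun i => binQF F (a i) (b i)

/-- `c` lies in the image `℘F` of the Artin–Schreier map `℘(x) = x² + x`. -/
def InArtinSchreier (F : Type*) [Field F] (c : F) : Prop :=
  ∃ x : F, c = x ^ 2 + x

/-- `δ` represents the Arf invariant (discriminant) of the even-rank form `q`:
`q` is isometric to some `[a₁,b₁] ⊥ ⋯ ⊥ [a_m,b_m]` with `∑ aᵢbᵢ = δ`. -/
def HasArf {F V : Type*} [Field F] [AddCommGroup V] [Module F V]
    (q : QuadraticForm F V) (δ : F) : Prop :=
  ∃ (m : ℕ) (a b : Fin m → F), QFIsometric q (binSumQF F a b) ∧ ∑ i, a i * b i = δ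

/-- A finite-dimensional algebra over `K` is split if it is isomorphic to a matrix
algebra over `K`. -/
def IsSplitAlgebra (K A : Type*) [Field K] [Ring A] [Algebra K A] : Prop :=
  ∃ n : ℕ, 0 < n ∧ Nonempty (A ≃ₐ[K] Matrix (Fin n) (Fin n) K)

/-- The (Schur) index of the central simple `K`-algebra `A` equals `k` : `A` is a matrix
algebra over a division algebra `D` of degree `k` (i.e. `dim_K D = k²`). -/
def AlgIndexEq (K : Type*) (A : Type*) [Field K] [Ring A] [Algebra K A] (k : ℕ) : Prop :=
  ∃ (D : Type) (_ : DivisionRing D) (_ : Algebra K D) (n : ℕ), 0 < n ∧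
    Nonempty (A ≃ₐ[K] Matrix (Fin n) (Fin n) D) ∧ Module.finrank K D = k * k

/-- Two algebras are Brauer equivalent (have the same class in the Brauer group) if they
become isomorphic after tensoring by matrix algebras. -/
def BrauerEquiv (K A B : Type*) [Field K] [Ring A] [Algebra K A] [Ring B] [Algebra K B] :
    Prop :=
  ∃ n m : ℕ, 0 < n ∧ 0 < m ∧
    Nonempty (Matrix (Fin n) (Fin n) A ≃ₐ[K] Matrix (Fin m) (Fin m) B)

/-- Scalar extension of a quadratic form along a ring homomorphism `σ : K →+* L`, computed
with respect to a basis `b` of `V`: the resulting form on `Lⁿ` has Gram coefficients the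
images under `σ` of those of `q`. -/
def QFBaseChange {K L V : Type*} [Field K] [Field L] [AddCommGroup V] [Module K V]
    (σ : K →+* L) {n : ℕ} (b : Module.Basis (Fin n) K V) (q : QuadraticForm K V) :
    QuadraticForm L (Fin n → L) :=
  (∑ i, σ (q (b i)) • QuadraticMap.linMulLin (LinearMap.proj i) (LinearMap.proj i)) +
  ∑ i : Fin n, ∑ j : Fin n,
    (if (i : ℕ) < (j : ℕ) then σ (QuadraticMap.polar (⇑q) (b i) (b j)) else 0) •
      QuadraticMap.linMulLin (LinearMap.proj i) (LinearMap.proj j)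

end


noncomputable section AuxStmt7


set_option maxHeartbeats 1000000 in
theorem aux_field {F : Type*} [Field F] (h2 : (2:F) = 0) (A B : F)
    (hT : ∀ x y z : F, x^2 + A*y^2 + y*z + B*z^2 = 0 → x = 0 ∧ y = 0 ∧ z = 0)
    (c0 c1 c2 c3 : F) (hN : c0^2 + c0*c3 + A*c1^2 + c1*c2 + B*c2^2 + A*B*c3^2 = 0) :
    c0 = 0 ∧ c1 = 0 ∧ c2 = 0 ∧ c3 = 0 := by
  have hA : A ≠ 0 := by
    intro h; simpa using (hT 0 1 0 (by rw [h]; ring)).2.1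
  have hB : B ≠ 0 := by
    intro h; simpa using (hT 0 0 1 (by rw [h]; ring)).2.2
  have hP : ∀ u v : F, u^2 + u*v + A*B*v^2 = 0 → u = 0 ∧ v = 0 := by
    intro u v h
    have hv : v = 0 := by
      by_contra hv
      have h3 := (hT 0 u (A*v) (by linear_combination A*h)).2.2
      rcases mul_eq_zero.mp h3 with h4 | h4
      · exact hA h4
      · exact hv h4
    subst hv
    refine ⟨?_, rfl⟩
    exact pow_eq_zero_iff two_ne_zero |>.mp (by linear_combination h)
  by_cases h12 : c1 = 0 ∧ c2 = 0
  · obtain ⟨hc1, hc2⟩ := h12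
    subst hc1; subst hc2
    have := hP c0 c3 (by linear_combination hN)
    exact ⟨this.1, rfl, rfl, this.2⟩
  · exfalso
    have hm : c1*c2 + B*c2^2 + A*c1^2 ≠ 0 := by
      intro h
      have h5 := hP (B*c2) c1 (by linear_combination B*h)
      rcases mul_eq_zero.mp h5.1 with h4 | h4
      · exact hB h4
      · exact h12 ⟨h5.2, h4⟩
    have h3 := hT ((B*c2*c3 + B*c0*c2 + A*B*c1*c3) * (c1*c2 + B*c2^2 + A*c1^2))
      ((B*c2*c3 + B*c0*c2 + A*B*c1*c3) * (c0*c1 + B*c2*c3))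
      ((c1*c2 + B*c2^2 + A*c1^2)^2 + A*(c0*c1 + B*c2*c3)^2)
      (by linear_combination (B*c1^3*c2^3 + B^2*c1^2*c2^4 + B^3*c1*c2^5 + B^4*c2^6 + A*B*c1^4*c2^2 + A*B*c0^2*c1^3*c2 + A*B^2*c0^2*c1^2*c2^2 + A*B^3*c1*c2^3*c3^2 + A*B^3*c1^2*c2^4 + A*B^4*c2^4*c3^2 + A^2*B*c1^5*c2 + A^2*B*c0^2*c1^4 + A^2*B^2*c1^4*c2^2 + A^2*B^3*c1^2*c2^2*c3^2 + A^3*B*c1^6) * hN + (B^2*c1^2*c2^4*c3^2 + B^2*c1^3*c2^5 + (2)*B^2*c0*c1^2*c2^4*c3 + B^2*c0^2*c1^2*c2^4 + (2)*B^3*c1*c2^5*c3^2 + (2)*B^3*c1^2*c2^6 + (3)*B^3*c0*c1*c2^5*c3 + B^3*c0^2*c1*c2^5 + B^4*c2^6*c3^2 + B^4*c1*c2^7 + B^4*c0*c2^6*c3 + A*B*c1^5*c2^3 + A*B*c0*c1^4*c2^2*c3 + A*B*c0^2*c1^4*c2^2 + (3)*A*B^2*c1^3*c2^3*c3^2 +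 (5)*A*B^2*c1^4*c2^4 + (8)*A*B^2*c0*c1^3*c2^3*c3 + (2)*A*B^2*c0^2*c1^2*c2^2*c3^2 + (3)*A*B^2*c0^2*c1^3*c2^3 + (2)*A*B^2*c0^3*c1^2*c2^2*c3 + (5)*A*B^3*c1^2*c2^4*c3^2 + (5)*A*B^3*c1^3*c2^5 + (2)*A*B^3*c0*c1*c2^3*c3^3 + (9)*A*B^3*c0*c1^2*c2^4*c3 + (3)*A*B^3*c0^2*c1*c2^3*c3^2 + A*B^3*c0^2*c1^2*c2^4 + A*B^3*c0^3*c1*c2^3*c3 + A*B^4*c2^4*c3^4 + (2)*A*B^4*c1*c2^5*c3^2 + A*B^4*c1^2*c2^6 + A*B^4*c0*c2^4*c3^3 + (3)*A*B^4*c0*c1*c2^5*c3 + (2)*A^2*B*c1^6*c2^2 + A^2*B*c0*c1^5*c2*c3 + A^2*B*c0^2*c1^5*c2 + (4)*A^2*B^2*c1^4*c2^2*c3^2 + (5)*A^2*B^2*c1^5*c2^3 + (8)*A^2*B^2*c0*c1^4*c2^2*c3 + (2)*A^2*B^2*c0^2*c1^3*c2*c3^2 + A^2*B^2*c0^2*c1^4*c2^2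 + (3)*A^2*B^2*c0^3*c1^3*c2*c3 + (5)*A^2*B^3*c1^3*c2^3*c3^2 + (2)*A^2*B^3*c1^4*c2^4 + (3)*A^2*B^3*c0*c1^2*c2^2*c3^3 + (6)*A^2*B^3*c0*c1^3*c2^3*c3 + (4)*A^2*B^3*c0^2*c1^2*c2^2*c3^2 + A^2*B^4*c1*c2^3*c3^4 + A^2*B^4*c1^2*c2^4*c3^2 + (3)*A^2*B^4*c0*c1*c2^3*c3^3 + A^3*B*c1^7*c2 + (2)*A^3*B^2*c1^5*c2*c3^2 + A^3*B^2*c1^6*c2^2 + (3)*A^3*B^2*c0*c1^5*c2*c3 + A^3*B^3*c1^4*c2^2*c3^2 + A^3*B^3*c0*c1^3*c2*c3^3) * h2)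
    have hC := h3.2.2
    have h4 := hT (c1*c2 + B*c2^2 + A*c1^2) (c0*c1 + B*c2*c3) 0
      (by linear_combination hC)
    exact hm h4.1

variable {F : Type*} [Field F]


theorem binQF_apply (A B : F) (v : Fin 2 → F) :
    binQF F A B v = A * (v 0 * v 0) + v 0 * v 1 + B * (v 1 * v 1) := by
  simp [binQF]

theorem quat_rels (A B : F) :
    (CliffordAlgebra.ι (binQF F A B) ![1,0]) * (CliffordAlgebra.ι (binQF F A B) ![1,0])
        = A • (1 : CliffordAlgebra (binQF F A B)) ∧
    (CliffordAlgebra.ι (binQF F A B) ![0,1]) * (CliffordAlgebra.ι (binQF F A B) ![0,1])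
        = B • (1 : CliffordAlgebra (binQF F A B)) ∧
    (CliffordAlgebra.ι (binQF F A B) ![1,0]) * (CliffordAlgebra.ι (binQF F A B) ![0,1])
      + (CliffordAlgebra.ι (binQF F A B) ![0,1]) * (CliffordAlgebra.ι (binQF F A B) ![1,0])
        = 1 := by
  refine ⟨?_, ?_, ?_⟩
  · rw [CliffordAlgebra.ι_sq_scalar, Algebra.algebraMap_eq_smul_one]
    congr 1
    rw [binQF_apply]; norm_num
  · rw [CliffordAlgebra.ι_sq_scalar, Algebra.algebraMap_eq_smul_one]
    congr 1
    rw [binQF_apply]; norm_num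
  · rw [CliffordAlgebra.ι_mul_ι_add_swap]
    have : QuadraticMap.polar (⇑(binQF F A B)) ![1,0] ![0,1] = 1 := by
      simp only [QuadraticMap.polar, binQF_apply]
      norm_num
      ring
    rw [this, map_one]

theorem quat_span (A B : F) (x : CliffordAlgebra (binQF F A B)) :
    ∃ c0 c1 c2 c3 : F,
      x = c0 • 1 + (c1 • CliffordAlgebra.ι (binQF F A B) ![1,0]
        + (c2 • CliffordAlgebra.ι (binQF F A B) ![0,1]
        + c3 • (CliffordAlgebra.ι (binQF F A B) ![1,0] * CliffordAlgebra.ι (binQF F A B) ![0,1]))) := by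
  obtain ⟨hii, hjj, hsum⟩ := quat_rels (F := F) A B
  set i := CliffordAlgebra.ι (binQF F A B) ![1,0] with hi
  set j := CliffordAlgebra.ι (binQF F A B) ![0,1] with hj
  have hji : j * i = 1 - i * j := eq_sub_of_add_eq' hsum
  set S : Submodule F (CliffordAlgebra (binQF F A B)) := Submodule.span F {1, i, j, i*j} with hS
  have mem1 : (1 : CliffordAlgebra (binQF F A B)) ∈ S := Submodule.subset_span (by simp)
  have memi : i ∈ S := Submodule.subset_span (by simp)
  have memj : j ∈ S := Submodule.subset_span (by simp)
  have memij : i*j ∈ S := Submodule.subset_span (by simp)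
  have closure_i : ∀ x ∈ S, x * i ∈ S := by
    intro x hx
    induction hx using Submodule.span_induction with
    | mem g hg =>
      rcases hg with rfl | rfl | rfl | rfl
      · rw [one_mul]; exact memi
      · rw [hii]; exact S.smul_mem _ mem1
      · rw [hji]; exact S.sub_mem mem1 memij
      · have : i * j * i = i - A • j := by
          rw [mul_assoc, hji, mul_sub, mul_one, ← mul_assoc, hii, smul_mul_assoc, one_mul]
        rw [this]; exact S.sub_mem memi (S.smul_mem _ memj)
    | zero => rw [zero_mul]; exact S.zero_mem
    | add a b _ _ ha hb => rw [add_mul]; exact S.add_mem ha hb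
    | smul c a _ ha => rw [smul_mul_assoc]; exact S.smul_mem _ ha
  have closure_j : ∀ x ∈ S, x * j ∈ S := by
    intro x hx
    induction hx using Submodule.span_induction with
    | mem g hg =>
      rcases hg with rfl | rfl | rfl | rfl
      · rw [one_mul]; exact memj
      · exact memij
      · rw [hjj]; exact S.smul_mem _ mem1
      · have : i * j * j = B • i := by
          rw [mul_assoc, hjj, mul_smul_comm, mul_one]
        rw [this]; exact S.smul_mem _ memi
    | zero => rw [zero_mul]; exact S.zero_mem
    | add a b _ _ ha hb => rw [add_mul]; exact S.add_mem ha hb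
    | smul c a _ ha => rw [smul_mul_assoc]; exact S.smul_mem _ ha
  have hmul : ∀ y ∈ S, ∀ x ∈ S, x * y ∈ S := by
    intro y hy
    induction hy using Submodule.span_induction with
    | mem g hg =>
      rcases hg with rfl | rfl | rfl | rfl
      · intro x hx; rw [mul_one]; exact hx
      · exact closure_i
      · exact closure_j
      · intro x hx; rw [← mul_assoc]; exact closure_j _ (closure_i x hx)
    | zero => intro x hx; rw [mul_zero]; exact S.zero_mem
    | add a b _ _ ha hb => intro x hx; rw [mul_add]; exact S.add_mem (ha x hx) (hb x hx)
    | smul c a _ ha => intro x hx; rw [mul_smul_comm]; exact S.smul_mem _ (ha x hx)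
  have htop : x ∈ S := by
    induction x using CliffordAlgebra.induction with
    | algebraMap r =>
      rw [Algebra.algebraMap_eq_smul_one]; exact S.smul_mem _ mem1
    | ι v =>
      have hv : v = v 0 • ![(1:F),0] + v 1 • ![0,1] := by
        funext k; fin_cases k <;> simp
      rw [hv, map_add, map_smul, map_smul, ← hi, ← hj]
      exact S.add_mem (S.smul_mem _ memi) (S.smul_mem _ memj)
    | mul a b ha hb => exact hmul b hb a ha
    | add a b ha hb => exact S.add_mem ha hb
  rw [hS, show ({1, i, j, i*j} : Set (CliffordAlgebra (binQF F A B)))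
      = insert 1 (insert i (insert j {i*j})) from rfl] at htop
  rw [Submodule.mem_span_insert] at htop
  obtain ⟨c0, z0, hz0, hx0⟩ := htop
  rw [Submodule.mem_span_insert] at hz0
  obtain ⟨c1, z1, hz1, hx1⟩ := hz0
  rw [Submodule.mem_span_insert] at hz1
  obtain ⟨c2, z2, hz2, hx2⟩ := hz1
  rw [Submodule.mem_span_singleton] at hz2
  obtain ⟨c3, hz3⟩ := hz2
  exact ⟨c0, c1, c2, c3, by rw [hx0, hx1, hx2, ← hz3]⟩


theorem quat_zero_smul (A B : F) (x : CliffordAlgebra (binQF F A B)) :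
    (0:F) • x = 0 := by rw [zero_smul]

theorem quat_norm_mul {F : Type*} [Field F] (h2 : (2:F) = 0) (A B : F) {Q : Type*} [Ring Q] [Algebra F Q]
    (i j : Q) (hii : i*i = A • 1) (hjj : j*j = B • 1) (hsum : i*j + j*i = 1)
    (c0 c1 c2 c3 : F) :
    (c0 • 1 + (c1 • i + (c2 • j + c3 • (i*j)))) * ((c0+c3) • (1:Q) + (c1 • i + (c2 • j + c3 • (i*j))))
      = (c0^2+c0*c3+A*c1^2+c1*c2+B*c2^2+A*B*c3^2) • 1
    ∧ ((c0+c3) • (1:Q) + (c1 • i + (c2 • j + c3 • (i*j)))) * (c0 • 1 + (c1 • i + (c2 • j + c3 • (i*j))))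
      = (c0^2+c0*c3+A*c1^2+c1*c2+B*c2^2+A*B*c3^2) • 1 := by
  have hji : j*i = 1 - i*j := eq_sub_of_add_eq' hsum
  have p1 : i*(i*j) = A • j := by rw [← mul_assoc, hii, smul_mul_assoc, one_mul]
  have p2 : j*(i*j) = j - B • i := by
    rw [← mul_assoc, hji, sub_mul, one_mul, mul_assoc, hjj, mul_smul_comm, mul_one]
  have p3 : (i*j)*i = i - A • j := by
    rw [mul_assoc, hji, mul_sub, mul_one, ← mul_assoc, hii, smul_mul_assoc, one_mul]
  have p4 : (i*j)*j = B • i := by rw [mul_assoc, hjj, mul_smul_comm, mul_one]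
  have p5 : (i*j)*(i*j) = i*j - (B*A) • 1 := by
    rw [mul_assoc, p2, mul_sub, mul_smul_comm, hii, smul_smul]
  constructor
  · simp only [add_mul, mul_add, smul_mul_assoc, mul_smul_comm, one_mul, mul_one,
      hii, hjj, hji, p1, p2, p3, p4, p5, smul_sub, smul_add, smul_smul]
    match_scalars
    · linear_combination (-(A*B*c3^2)) * h2
    · linear_combination (c0*c1 + c1*c3) * h2
    · linear_combination (c0*c2 + c2*c3) * h2
    · linear_combination (c0*c3 + c3^2) * h2
  · simp only [add_mul, mul_add, smul_mul_assoc, mul_smul_comm, one_mul, mul_one,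
      hii, hjj, hji, p1, p2, p3, p4, p5, smul_sub, smul_add, smul_smul]
    match_scalars
    · linear_combination (-(A*B*c3^2)) * h2
    · linear_combination (c0*c1 + c1*c3) * h2
    · linear_combination (c0*c2 + c2*c3) * h2
    · linear_combination (c0*c3 + c3^2) * h2

end AuxStmt7

set_option maxHeartbeats 1600000 in
set_option synthInstance.maxHeartbeats 400000 in
/-- over a non-archimedean local field of characteristic 2, if the rank-3
form `⟨d⟩ ⊥ [a,b]` is anisotropic, then the quaternion algebra `{da, d⁻¹b / F}`
(realized as the Clifford algebra of the binary form `[da, d⁻¹b]`) is a division algebra;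
in particular it is not split. -/
theorem stmt_7 {Fq : Type} [Field Fq] [Fintype Fq] [CharP Fq 2]
    (d a b : LaurentSeries Fq) (hd : d ≠ 0)
    (hani : (QuadraticMap.prod (d • QuadraticMap.sq) (binQF (LaurentSeries Fq) a b)).Anisotropic) :
    (∀ x : CliffordAlgebra (binQF (LaurentSeries Fq) (d * a) (d⁻¹ * b)), x ≠ 0 → IsUnit x) ∧
      ¬ IsSplitAlgebra (LaurentSeries Fq) (CliffordAlgebra (binQF (LaurentSeries Fq) (d * a) (d⁻¹ * b))) := by
  
  classical
  have h2 : (2 : LaurentSeries Fq) = 0 := by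
    have hq : (2 : Fq) = 0 := by exact_mod_cast CharP.cast_eq_zero Fq 2
    calc (2 : LaurentSeries Fq) = algebraMap Fq _ 2 := (map_ofNat _ 2).symm
    _ = 0 := by rw [hq, map_zero]
  have hdinv : d⁻¹ ≠ 0 := inv_ne_zero hd
  have hT : ∀ x y z : LaurentSeries Fq,
      x^2 + (d*a)*y^2 + y*z + (d⁻¹*b)*z^2 = 0 → x = 0 ∧ y = 0 ∧ z = 0 := by
    intro x y z h
    have h0 := hani (x := (d⁻¹*x, ![y, d⁻¹*z])) ?_
    · have h1 : d⁻¹ * x = 0 := congrArg Prod.fst h0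
      have hv : ![y, d⁻¹*z] = 0 := congrArg Prod.snd h0
      have hy : y = 0 := by simpa using congrFun hv 0
      have hz1 : d⁻¹ * z = 0 := by simpa using congrFun hv 1
      refine ⟨?_, hy, ?_⟩
      · rcases mul_eq_zero.mp h1 with h' | h'
        · exact absurd h' hdinv
        · exact h'
      · rcases mul_eq_zero.mp hz1 with h' | h'
        · exact absurd h' hdinv
        · exact h'
    · show (QuadraticMap.prod (d • QuadraticMap.sq) (binQF (LaurentSeries Fq) a b))
        (d⁻¹*x, ![y, d⁻¹*z]) = 0
      rw [QuadraticMap.prod_apply, QuadraticMap.smul_apply, binQF_apply]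
      simp only [QuadraticMap.sq, QuadraticMap.linMulLin_apply, LinearMap.id_coe, id_eq,
        Matrix.cons_val_zero, Matrix.cons_val_one, Matrix.head_cons, smul_eq_mul]
      have hdd : d * d⁻¹ = 1 := mul_inv_cancel₀ hd
      linear_combination d⁻¹ * h + (d⁻¹*x^2 - a*y^2) * hdd
  have hdiv : ∀ x : CliffordAlgebra (binQF (LaurentSeries Fq) (d * a) (d⁻¹ * b)),
      x ≠ 0 → IsUnit x := by
    intro x hx
    obtain ⟨hii, hjj, hsum⟩ := quat_rels (F := LaurentSeries Fq) (d*a) (d⁻¹*b)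
    obtain ⟨c0, c1, c2, c3, hxe⟩ := quat_span (d*a) (d⁻¹*b) x
    by_cases hc : c0 = 0 ∧ c1 = 0 ∧ c2 = 0 ∧ c3 = 0
    · exfalso; apply hx
      rw [hxe, hc.1, hc.2.1, hc.2.2.1, hc.2.2.2, quat_zero_smul, quat_zero_smul,
        quat_zero_smul, quat_zero_smul, add_zero, add_zero, add_zero]
    · have hN : c0^2 + c0*c3 + (d*a)*c1^2 + c1*c2 + (d⁻¹*b)*c2^2 + (d*a)*(d⁻¹*b)*c3^2 ≠ 0 :=
        fun h => hc (aux_field h2 (d*a) (d⁻¹*b) hT c0 c1 c2 c3 h)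
      obtain ⟨hmul1, hmul2⟩ := quat_norm_mul h2 (d*a) (d⁻¹*b)
        (CliffordAlgebra.ι (binQF (LaurentSeries Fq) (d*a) (d⁻¹*b)) ![1,0])
        (CliffordAlgebra.ι (binQF (LaurentSeries Fq) (d*a) (d⁻¹*b)) ![0,1])
        hii hjj hsum c0 c1 c2 c3
      refine ⟨⟨x, (c0^2 + c0*c3 + (d*a)*c1^2 + c1*c2 + (d⁻¹*b)*c2^2 + (d*a)*(d⁻¹*b)*c3^2)⁻¹ •
        ((c0+c3) • 1 + (c1 • CliffordAlgebra.ι (binQF (LaurentSeries Fq) (d*a) (d⁻¹*b)) ![1,0]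
          + (c2 • CliffordAlgebra.ι (binQF (LaurentSeries Fq) (d*a) (d⁻¹*b)) ![0,1]
          + c3 • (CliffordAlgebra.ι (binQF (LaurentSeries Fq) (d*a) (d⁻¹*b)) ![1,0]
              * CliffordAlgebra.ι (binQF (LaurentSeries Fq) (d*a) (d⁻¹*b)) ![0,1])))), ?_, ?_⟩, rfl⟩
      · rw [hxe, mul_smul_comm, hmul1]
        exact inv_smul_smul₀ hN 1
      · rw [hxe, smul_mul_assoc, hmul2]
        exact inv_smul_smul₀ hN 1
  refine ⟨hdiv, ?_⟩
  rintro ⟨n, hn, ⟨e⟩⟩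
  obtain ⟨hii, hjj, hsum⟩ := quat_rels (F := LaurentSeries Fq) (d*a) (d⁻¹*b)
  rcases lt_or_ge n 2 with hn2 | hn2
  · obtain rfl : n = 1 := by omega
    have hcomm : ∀ u v : Matrix (Fin 1) (Fin 1) (LaurentSeries Fq), u*v = v*u := by
      intro u v; ext p q; fin_cases p; fin_cases q
      simp [Matrix.mul_apply, mul_comm]
    have h1 : (1 : Matrix (Fin 1) (Fin 1) (LaurentSeries Fq))
        = e (CliffordAlgebra.ι (binQF (LaurentSeries Fq) (d*a) (d⁻¹*b)) ![1,0]) * e (CliffordAlgebra.ι (binQF (LaurentSeries Fq) (d*a) (d⁻¹*b)) ![0,1]) + e (CliffordAlgebra.ι (binQF (LaurentSeries Fq) (d*a) (d⁻¹*b)) ![0,1]) * e (CliffordAlgebra.ι (binQF (LaurentSeries Fq) (d*a) (d⁻¹*b)) ![1,0]) := by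
      rw [← map_mul e, ← map_mul e, ← map_add e, hsum, map_one]
    rw [hcomm (e (CliffordAlgebra.ι (binQF (LaurentSeries Fq) (d*a) (d⁻¹*b)) ![0,1]))] at h1
    have h3 : e (CliffordAlgebra.ι (binQF (LaurentSeries Fq) (d*a) (d⁻¹*b)) ![1,0])
        * e (CliffordAlgebra.ι (binQF (LaurentSeries Fq) (d*a) (d⁻¹*b)) ![0,1])
        + e (CliffordAlgebra.ι (binQF (LaurentSeries Fq) (d*a) (d⁻¹*b)) ![1,0])
        * e (CliffordAlgebra.ι (binQF (LaurentSeries Fq) (d*a) (d⁻¹*b)) ![0,1]) = 0 := by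
      have h4 := two_smul (LaurentSeries Fq)
        (e (CliffordAlgebra.ι (binQF (LaurentSeries Fq) (d*a) (d⁻¹*b)) ![1,0])
          * e (CliffordAlgebra.ι (binQF (LaurentSeries Fq) (d*a) (d⁻¹*b)) ![0,1]))
      rw [h2, zero_smul] at h4
      exact h4.symm
    rw [h3] at h1
    exact one_ne_zero h1
  · set p0 : Fin n := ⟨0, by omega⟩ with hp0
    set p1 : Fin n := ⟨1, by omega⟩ with hp1
    have h01 : p1 ≠ p0 := by
      rw [hp0, hp1]
      intro h
      simpa using congrArg Fin.val h
    set M := Matrix.single p0 p1 (1 : LaurentSeries Fq) with hMdef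
    have hM0 : M ≠ 0 := by
      intro h
      have h5 := congrFun (congrFun h p0) p1
      rw [hMdef, Matrix.single_apply_same] at h5
      simp at h5
    have hMM : M * M = 0 := by
      rw [hMdef]
      exact Matrix.single_mul_single_of_ne (h := h01) ..
    have hsymm0 : e.symm M ≠ 0 := by
      intro h
      apply hM0
      have := congrArg e h
      simpa using this
    have hu : IsUnit (e.symm M) := hdiv _ hsymm0
    have hu2 : IsUnit M := by
      have := hu.map e.toAlgHom
      simpa using this
    obtain ⟨u, huu⟩ := hu2
    have hMz : M = 0 := by
      have hfin : M = (↑(u⁻¹) : Matrix (Fin n) (Fin n) (LaurentSeries Fq)) * (M * M) := by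
        rw [← mul_assoc, ← huu, Units.inv_mul, one_mul]
      rw [hMM, mul_zero] at hfin
      exact hfin
    exact hM0 hMz
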